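/- For every signed graph (G,σ) whose underlying graph has an acyclic colouring with col_2(G) colours, the chromatic number of the strong exact-distance -2 graph of (G,σ) is at most col_2(G)·2^{col_2(G)-1}. -/

import Mathlib

open SimpleGraph

/-- The number of negative edges of a walk, where `σ e = true` means edge `e` is negative. -/
def negCount {V : Type} {G : SimpleGraph V} (σ : Sym2 V → Bool) {x y : V}
    (p : G.Walk x y) : ℕ :=
  (p.edges.filter (fun e => σ e)).length

/-- A walk is negative if it contains an odd number of negative edges. -/
def IsNegWalk {V : Type} {G : SimpleGraph V} (σ : Sym2 V → Bool) {x y : V}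
    (p : G.Walk x y) : Prop :=
  Odd (negCount σ p)

/-- The exact-distance `-k` graph of the signed graph `(G, σ)`:
`xy` is an edge iff `d_G(x,y) = k` and every `xy`-path of length `k` is negative. -/
def exactDistNeg {V : Type} (G : SimpleGraph V) (σ : Sym2 V → Bool) (k : ℕ) :
    SimpleGraph V :=
  SimpleGraph.fromRel (fun x y =>
    G.dist x y = k ∧ ∀ p : G.Walk x y, p.IsPath → p.length = k → IsNegWalk σ p)

/-- The strong exact-distance `-k` graph of the signed graph `(G, σ)`:
`xy` is an edge iff `d_G(x,y) = k` and some `xy`-path of length `k` is negative. -/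
def strongExactDistNeg {V : Type} (G : SimpleGraph V) (σ : Sym2 V → Bool) (k : ℕ) :
    SimpleGraph V :=
  SimpleGraph.fromRel (fun x y =>
    G.dist x y = k ∧ ∃ p : G.Walk x y, p.IsPath ∧ p.length = k ∧ IsNegWalk σ p)

/-- `WReach G L k y` : the set of vertices weakly `k`-reachable from `y` w.r.t. ordering `L`. -/
def WReach {V : Type} (G : SimpleGraph V) (L : LinearOrder V) (k : ℕ) (y : V) : Set V :=
  {x | ∃ p : G.Walk x y, p.IsPath ∧ p.length ≤ k ∧ ∀ z ∈ p.support, L.le x z}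

/-- The weak `k`-colouring number of `G`. -/
noncomputable def wcol {V : Type} (G : SimpleGraph V) (k : ℕ) : ℕ :=
  ⨅ L : LinearOrder V, ⨆ y : V, (WReach G L k y).ncard


section AuxLemmas

private lemma negCount_append {V : Type} {G : SimpleGraph V} (σ : Sym2 V → Bool) {x y z : V}
    (p : G.Walk x y) (q : G.Walk y z) :
    negCount σ (p.append q) = negCount σ p + negCount σ q := by
  simp [negCount, Walk.edges_append, List.filter_append]

private lemma negCount_single {V : Type} {G : SimpleGraph V} (σ : Sym2 V → Bool) {x y : V}
    (h : G.Adj x y) :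
    negCount σ (Walk.cons h Walk.nil) = if σ s(x, y) then 1 else 0 := by
  simp only [negCount, Walk.edges_cons, Walk.edges_nil]
  by_cases hσ : σ s(x, y) <;> simp [hσ, List.filter_cons]

private lemma negCount_concat {V : Type} {G : SimpleGraph V} (σ : Sym2 V → Bool) {x y z : V}
    (p : G.Walk x y) (h : G.Adj y z) :
    negCount σ (p.concat h) = negCount σ p + (if σ s(y, z) then 1 else 0) := by
  rw [Walk.concat_eq_append, negCount_append, negCount_single]

private lemma xor_parity (a : ℕ) (b : Bool) :
    xor (decide (Odd (a + (if b then 1 else 0)))) (decide (Odd a)) = b := by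
  cases b <;> rcases Nat.even_or_odd a with ha | ha <;>
    simp [Nat.odd_add_one, ha, Nat.not_odd_iff_even, Nat.not_even_iff_odd]

private lemma path_parity {V : Type} {H : SimpleGraph V} (hH : H.IsAcyclic)
    (σ : Sym2 V → Bool) {rr u v : V} (pu : H.Walk rr u) (pv : H.Walk rr v)
    (hpu : pu.IsPath) (hpv : pv.IsPath) (h : H.Adj u v) :
    xor (decide (Odd (negCount σ pu))) (decide (Odd (negCount σ pv))) = σ s(u, v) := by
  classical
  have uniq := isAcyclic_iff_path_unique.mp hH
  by_cases hv : v ∈ pu.support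
  · have hq : (pu.takeUntil v hv).IsPath := hpu.takeUntil hv
    have hd : (pu.dropUntil v hv).IsPath := hpu.dropUntil hv
    have hsingle : (Walk.cons h.symm Walk.nil : H.Walk v u).IsPath := by
      simp [Walk.cons_isPath_iff, h.ne']
    have hdrop : pu.dropUntil v hv = Walk.cons h.symm Walk.nil :=
      congrArg Subtype.val (uniq ⟨pu.dropUntil v hv, hd⟩ ⟨Walk.cons h.symm Walk.nil, hsingle⟩)
    have htake : pu.takeUntil v hv = pv :=
      congrArg Subtype.val (uniq ⟨pu.takeUntil v hv, hq⟩ ⟨pv, hpv⟩)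
    have hcount : negCount σ pu = negCount σ pv + (if σ s(u, v) then 1 else 0) := by
      conv_lhs => rw [← pu.take_spec hv]
      rw [negCount_append, htake, hdrop, negCount_single, Sym2.eq_swap]
    rw [hcount, xor_parity]
  · have hW : (pu.concat h).IsPath := by
      rw [← Walk.isPath_reverse_iff, Walk.reverse_concat, Walk.cons_isPath_iff]
      exact ⟨hpu.reverse, by simpa [Walk.support_reverse] using hv⟩
    have hconcat : pu.concat h = pv := congrArg Subtype.val (uniq ⟨pu.concat h, hW⟩ ⟨pv, hpv⟩)
    have hcount : negCount σ pv = negCount σ pu + (if σ s(u, v) then 1 else 0) := by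
      rw [← hconcat, negCount_concat]
    rw [hcount, Bool.xor_comm, xor_parity]

private lemma path_parity' {V : Type} {H : SimpleGraph V} (hH : H.IsAcyclic)
    (σ : Sym2 V → Bool) {rr rr' u v : V} (e : rr = rr')
    (pu : H.Walk rr u) (pv : H.Walk rr' v)
    (hpu : pu.IsPath) (hpv : pv.IsPath) (h : H.Adj u v) :
    xor (decide (Odd (negCount σ pu))) (decide (Odd (negCount σ pv))) = σ s(u, v) := by
  subst e; exact path_parity hH σ pu pv hpu hpv h

private lemma exists_signing {V : Type} {H : SimpleGraph V} (hH : H.IsAcyclic)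
    (σ : Sym2 V → Bool) :
    ∃ f : V → Bool, ∀ u v, H.Adj u v → xor (f u) (f v) = σ s(u, v) := by
  classical
  have hreach : ∀ v : V, H.Reachable (Quot.out (H.connectedComponentMk v)) v := fun v =>
    ConnectedComponent.exact (Quot.out_eq _)
  refine ⟨fun v => decide (Odd (negCount σ ((hreach v).some.toPath :
    H.Walk (Quot.out (H.connectedComponentMk v)) v))), fun u v h => ?_⟩
  exact path_parity' hH σ
    (congrArg Quot.out (ConnectedComponent.sound h.reachable))
    _ _ ((hreach u).some.toPath).2 ((hreach v).some.toPath).2 h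

private lemma walk_support_prop {V : Type} {H : SimpleGraph V} {P : V → Prop}
    (hP : ∀ u v, H.Adj u v → P u) :
    ∀ {a b : V} (p : H.Walk a b), ∀ z ∈ p.support, z = b ∨ P z := by
  intro a b p
  induction p with
  | nil => intro z hz; left; simpa using hz
  | cons h q ih =>
    intro z hz
    rw [Walk.support_cons, List.mem_cons] at hz
    rcases hz with rfl | hz
    · exact Or.inr (hP _ _ h)
    · exact ih z hz

end AuxLemmas

/-- `DReach G L k y` : the set of vertices `x` such that there is an `xy`-path
`z_0, …, z_s` (`x = z_0`, `y = z_s`) of length `s ≤ k` on which `x` is the `L`-minimum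
and `y ≤_L z_i` for all `⌊k/2⌋ + 1 ≤ i ≤ s`. -/
def DReach {V : Type} (G : SimpleGraph V) (L : LinearOrder V) (k : ℕ) (y : V) : Set V :=
  {x | ∃ p : G.Walk x y, p.IsPath ∧ p.length ≤ k ∧ (∀ z ∈ p.support, L.le x z) ∧
        ∀ i, k / 2 + 1 ≤ i → i ≤ p.length → L.le y (p.support.getD i y)}

/-- The distance-`k`-colouring number of `G`. -/
noncomputable def dcol {V : Type} (G : SimpleGraph V) (k : ℕ) : ℕ :=
  ⨅ L : LinearOrder V, ⨆ y : V, (DReach G L k y).ncard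

/-- `SReach G L k y` : the set of vertices strongly `k`-reachable from `y` w.r.t. `L`. -/
def SReach {V : Type} (G : SimpleGraph V) (L : LinearOrder V) (k : ℕ) (y : V) : Set V :=
  {x | ∃ p : G.Walk x y, p.IsPath ∧ p.length ≤ k ∧ (∀ z ∈ p.support, L.le x z) ∧
        ∀ z ∈ p.support, z ≠ x → L.le y z}

/-- The strong `k`-colouring number of `G`. -/
noncomputable def scol {V : Type} (G : SimpleGraph V) (k : ℕ) : ℕ :=
  ⨅ L : LinearOrder V, ⨆ y : V, (SReach G L k y).ncard

/-- `H` is a minor of `G` (branch-set definition). -/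
def IsMinor {W V : Type} (H : SimpleGraph W) (G : SimpleGraph V) : Prop :=
  ∃ B : W → Set V,
    (∀ w, (B w).Nonempty) ∧
    (∀ w, (G.induce (B w)).Connected) ∧
    (Pairwise (Function.onFun Disjoint B)) ∧
    ∀ w w', H.Adj w w' → ∃ u ∈ B w, ∃ v ∈ B w', G.Adj u v

/-- `G` is planar iff it has no `K₅` and no `K₃,₃` minor (Wagner's theorem). -/
def IsPlanar {V : Type} (G : SimpleGraph V) : Prop :=
  ¬ IsMinor (completeGraph (Fin 5)) G ∧
  ¬ IsMinor (completeBipartiteGraph (Fin 3) (Fin 3)) G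

/-- `G` is outerplanar iff it has no `K₄` and no `K₂,₃` minor. -/
def IsOuterplanar {V : Type} (G : SimpleGraph V) : Prop :=
  ¬ IsMinor (completeGraph (Fin 4)) G ∧
  ¬ IsMinor (completeBipartiteGraph (Fin 2) (Fin 3)) G

/-- `G` has treewidth at most `t` (tree-decomposition definition). -/
def HasTreewidthLE {V : Type} (G : SimpleGraph V) (t : ℕ) : Prop :=
  ∃ (ι : Type) (T : SimpleGraph ι) (B : ι → Finset V),
    T.Connected ∧ T.IsAcyclic ∧
    (∀ v, ∃ i, v ∈ B i) ∧
    (∀ u v, G.Adj u v → ∃ i, u ∈ B i ∧ v ∈ B i) ∧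
    (∀ v, (T.induce {i | v ∈ B i}).Connected) ∧
    (∀ i, (B i).card ≤ t + 1)
theorem strongExactDistNeg_two_chromatic_le_of_acyclic_coloring
    {V : Type} [Fintype V] (G : SimpleGraph V) (σ : Sym2 V → Bool)
    (hC : ∃ C : V → Fin (scol G 2),
      (∀ u v, G.Adj u v → C u ≠ C v) ∧
      ∀ (v : V) (p : G.Walk v v), p.IsCycle → 3 ≤ (p.support.map C).toFinset.card) :
    (strongExactDistNeg G σ 2).chromaticNumber ≤
      ((scol G 2 * 2 ^ (scol G 2 - 1) : ℕ) : ℕ∞) := by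
  classical
  obtain ⟨C, hadjC, hcycC⟩ := hC
  -- the bicoloured subgraphs
  let H : Fin (scol G 2) → Fin (scol G 2) → SimpleGraph V := fun i j =>
    { Adj := fun u v => G.Adj u v ∧ ((C u = i ∧ C v = j) ∨ (C u = j ∧ C v = i))
      symm := ⟨fun u v h => ⟨h.1.symm, by tauto⟩⟩
      loopless := ⟨fun v h => G.loopless.irrefl v h.1⟩ }
  have hle : ∀ i j, H i j ≤ G := fun i j _ _ h => h.1
  have hacyc : ∀ i j, (H i j).IsAcyclic := by
    intro i j v p hp
    have hsub : ∀ e ∈ p.edges, e ∈ G.edgeSet := fun e he =>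
      SimpleGraph.edgeSet_mono (hle i j) (p.edges_subset_edgeSet he)
    have hq : (p.transfer G hsub).IsCycle := hp.transfer hsub
    have h3 := hcycC v (p.transfer G hsub) hq
    rw [Walk.support_transfer] at h3
    have hcolsup : ∀ z ∈ p.support, C z = i ∨ C z = j := by
      have hP : ∀ u v, (H i j).Adj u v → (C u = i ∨ C u = j) := by
        intro u v h
        rcases h.2 with ⟨h1, _⟩ | ⟨h1, _⟩
        · exact Or.inl h1
        · exact Or.inr h1
      intro z hz
      rcases walk_support_prop hP p z hz with rfl | hz'
      · -- z = v : use the first edge of the (non-nil) cycle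
        obtain ⟨u, h, q, rfl⟩ := Walk.not_nil_iff.mp hp.not_nil
        exact hP _ _ h
      · exact hz'
    have hsubset : (p.support.map C).toFinset ⊆ ({i, j} : Finset (Fin (scol G 2))) := by
      intro c hc
      rw [List.mem_toFinset, List.mem_map] at hc
      obtain ⟨z, hz, rfl⟩ := hc
      rcases hcolsup z hz with h | h <;> simp [h]
    have hcard2 : (p.support.map C).toFinset.card ≤ 2 := by
      calc (p.support.map C).toFinset.card ≤ ({i, j} : Finset (Fin (scol G 2))).card :=
            Finset.card_le_card hsubset
        _ ≤ 2 := Finset.card_insert_le i {j} |>.trans (by simp)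
    omega
  -- pick the sign-compatible 2-colourings of the (acyclic) bicoloured subgraphs
  have hF : ∀ i j, ∃ f : V → Bool, ∀ u v, (H i j).Adj u v → xor (f u) (f v) = σ s(u, v) :=
    fun i j => exists_signing (hacyc i j) σ
  choose F hFspec using hF
  -- the key property
  have key : ∀ a b : V,
      (G.dist a b = 2 ∧ ∃ p : G.Walk a b, p.IsPath ∧ p.length = 2 ∧ IsNegWalk σ p) →
      (⟨C a, fun j => F (C a) j.1 a⟩ :
          (i : Fin (scol G 2)) × ({j : Fin (scol G 2) // j ≠ i} → Bool)) ≠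
        ⟨C b, fun j => F (C b) j.1 b⟩ := by
    rintro a b ⟨-, p, hp, hlen, hneg⟩ heq
    have hCab : C a = C b := congrArg Sigma.fst heq
    cases p with
    | nil => simp at hlen
    | cons h1 q =>
      rename_i w
      cases q with
      | nil => simp at hlen
      | cons h2 q2 =>
        cases q2 with
        | cons h3 q3 => simp [Walk.length_cons] at hlen
        | nil =>
          have hCaw : C a ≠ C w := hadjC _ _ h1
          have e1 := hFspec (C a) (C w) a w ⟨h1, Or.inl ⟨rfl, rfl⟩⟩
          have e2 := hFspec (C a) (C w) w b ⟨h2, Or.inr ⟨rfl, hCab.symm⟩⟩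
          have hone : xor (σ s(a, w)) (σ s(w, b)) = true := by
            cases hb1 : σ s(a, w) <;> cases hb2 : σ s(w, b) <;>
              simp [IsNegWalk, negCount, List.filter_cons, hb1, hb2, Nat.odd_iff] at hneg ⊢
          have hx : xor (F (C a) (C w) a) (F (C a) (C w) b) = true := by
            rw [← hone, ← e1, ← e2]
            cases F (C a) (C w) a <;> cases F (C a) (C w) w <;> cases F (C a) (C w) b <;> rfl
          have hfab : F (C a) (C w) a ≠ F (C a) (C w) b := by
            intro hf
            rw [hf] at hx
            cases F (C a) (C w) b <;> simp at hx
          rw [← hCab] at heq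
          have hfun : (fun j : {j : Fin (scol G 2) // j ≠ C a} => F (C a) j.1 a) =
              (fun j : {j : Fin (scol G 2) // j ≠ C a} => F (C a) j.1 b) := by
            simpa using heq
          exact hfab (congrFun hfun ⟨C w, Ne.symm hCaw⟩)
  -- build the colouring
  let col : (strongExactDistNeg G σ 2).Coloring
      ((i : Fin (scol G 2)) × ({j : Fin (scol G 2) // j ≠ i} → Bool)) :=
    Coloring.mk (fun v => ⟨C v, fun j => F (C v) j.1 v⟩) (by
      intro a b hab
      rw [strongExactDistNeg, SimpleGraph.fromRel_adj] at hab
      rcases hab with ⟨hne, h | h⟩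
      · exact key a b h
      · exact (key b a h).symm)
  have hcd := col.colorable
  have hcard : Fintype.card
      ((i : Fin (scol G 2)) × ({j : Fin (scol G 2) // j ≠ i} → Bool)) =
      scol G 2 * 2 ^ (scol G 2 - 1) := by
    rw [Fintype.card_sigma]
    have h1 : ∀ i : Fin (scol G 2),
        Fintype.card ({j : Fin (scol G 2) // j ≠ i} → Bool) = 2 ^ (scol G 2 - 1) := by
      intro i
      rw [Fintype.card_fun, Fintype.card_bool]
      congr 1
      have h2 : Fintype.card {j : Fin (scol G 2) // j ≠ i} =
          Fintype.card (Fin (scol G 2)) - Fintype.card {j : Fin (scol G 2) // j = i} :=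
        Fintype.card_subtype_compl _
      rw [h2, Fintype.card_subtype_eq, Fintype.card_fin]
    simp [h1, Finset.sum_const, Finset.card_univ]
  rw [← hcard]
  exact hcd.chromaticNumber_le
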